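/- Let F_q be a finite field and consider the twisted bundle complex E built from a base boundary matrix ∂^B ∈ F_q^{B₀×B₁}, a fiber boundary matrix ∂^F ∈ F_q^{F₀×F₁}, and a connection assigning to each (b, a) ∈ B₁×B₀ permutation matrices P⁰_{b,a} on F_q^{F₀} and P¹_{b,a} on F_q^{F₁} with P⁰_{b,a} ∂^F = ∂^F P¹_{b,a}. Suppose: (ii) every column of ∂^F has entries summing to 0 in F_q; (iii) every vector c ∈ F_q^{F₀} with Σ_i c_i = 0 lies in the column space of ∂^F; (iv) ∂^B : F_q^{B₁} → F_q^{B₀} is surjective; and (v) every connection permutation acts trivially on fiber 1-cycles, i.e., P¹_{b,a} z = z for all z ∈ ker ∂^F and all (b, a). Then every z ∈ ker ∂₁^E with Π₁(z) = 0 lies in im ∂₂^E; i.e., the induced map Π_* : H₁(E) → H₁(B) is one-to-one. -/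

import Mathlib

open Matrix

noncomputable section

variable {F : Type*} [Field F] [Fintype F]
variable {B₀ B₁ F₀ F₁ : Type*} [Fintype B₀] [Fintype B₁] [Fintype F₀] [Fintype F₁]
  [DecidableEq B₀] [DecidableEq B₁] [DecidableEq F₀] [DecidableEq F₁]

/-- The boundary map `∂₂^E` of the twisted bundle complex:
`∂₂^E(b ⊗ f) = (Σ_a (∂^B)_{a,b} · a ⊗ (P¹_{b,a} f)) ⊕ (−b ⊗ (∂^F f))`. -/
def bundleD2 (dB : Matrix B₀ B₁ F) (dF : Matrix F₀ F₁ F)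
    (P1 : B₁ → B₀ → Matrix F₁ F₁ F) (w : B₁ × F₁ → F) :
    ((B₀ × F₁) → F) × ((B₁ × F₀) → F) :=
  (fun p => ∑ b : B₁, dB p.1 b * (P1 b p.1).mulVec (fun j => w (b, j)) p.2,
   fun p => -(dF.mulVec (fun j => w (p.1, j)) p.2))

/-- The boundary map `∂₁^E` of the twisted bundle complex:
`∂₁^E(a ⊗ f ⊕ b ⊗ f') = a ⊗ (∂^F f) + Σ_a (∂^B)_{a,b} · a ⊗ (P⁰_{b,a} f')`. -/
def bundleD1 (dB : Matrix B₀ B₁ F) (dF : Matrix F₀ F₁ F)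
    (P0 : B₁ → B₀ → Matrix F₀ F₀ F)
    (z : ((B₀ × F₁) → F) × ((B₁ × F₀) → F)) : (B₀ × F₀) → F :=
  fun p => dF.mulVec (fun j => z.1 (p.1, j)) p.2
    + ∑ b : B₁, dB p.1 b * (P0 b p.1).mulVec (fun i => z.2 (b, i)) p.2

/-- assume (ii) every column of `∂^F` sums to `0`; (iii) every fiber
0-chain with coordinate sum `0` lies in the column space of `∂^F`; (iv) `∂^B` is
surjective (vanishing zeroth Betti number of the base); and (v) every connection
permutation acts trivially on fiber 1-cycles.  Then every `z ∈ ker ∂₁^E` with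
`Π₁(z) = 0` lies in `im ∂₂^E`; i.e. the induced map `Π_* : H₁(E) → H₁(B)` is
one-to-one. -/
theorem bundle_projection_one_to_one
    (dB : Matrix B₀ B₁ F) (dF : Matrix F₀ F₁ F)
    (P0 : B₁ → B₀ → Matrix F₀ F₀ F) (P1 : B₁ → B₀ → Matrix F₁ F₁ F)
    (hP0 : ∀ b a, ∃ σ : Equiv.Perm F₀, P0 b a = σ.permMatrix F)
    (hP1 : ∀ b a, ∃ σ : Equiv.Perm F₁, P1 b a = σ.permMatrix F)
    (hcomp : ∀ b a, P0 b a * dF = dF * P1 b a)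
    (hcol : ∀ j : F₁, ∑ i : F₀, dF i j = 0)
    (hbdry : ∀ c : F₀ → F, (∑ i : F₀, c i = 0) → ∃ f : F₁ → F, dF.mulVec f = c)
    (hBsurj : Function.Surjective (dB.mulVec : (B₁ → F) → (B₀ → F)))
    (htriv : ∀ (b : B₁) (a : B₀) (zf : F₁ → F),
      dF.mulVec zf = 0 → (P1 b a).mulVec zf = zf) :
    ∀ z : ((B₀ × F₁) → F) × ((B₁ × F₀) → F),
      bundleD1 dB dF P0 z = 0 →
      (fun b : B₁ => ∑ i : F₀, z.2 (b, i)) = 0 →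
      ∃ w : B₁ × F₁ → F, bundleD2 dB dF P1 w = z := by
  intro z hz1 hz2
  classical
  obtain ⟨S, hS⟩ := (dB.mulVecLin).exists_rightInverse_of_surjective
    (LinearMap.range_eq_top.mpr (by exact hBsurj))
  have hSid : ∀ v : B₀ → F, dB.mulVecLin (S v) = v := fun v => LinearMap.ext_iff.mp hS v
  have hsum : ∀ b : B₁, ∑ i : F₀, z.2 (b, i) = 0 := fun b => congrFun hz2 b
  choose f hf using fun b => hbdry (fun i => z.2 (b, i)) (hsum b)
  set r : B₀ → F₁ → F := fun a j =>
    z.1 (a, j) + ∑ b : B₁, dB a b * (P1 b a).mulVec (f b) j with hrdef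
  have key : ∀ b a, dF.mulVec ((P1 b a).mulVec (f b)) = (P0 b a).mulVec (fun i => z.2 (b, i)) := by
    intro b a
    rw [Matrix.mulVec_mulVec, ← hcomp, ← Matrix.mulVec_mulVec, hf]
  have hz1' : ∀ a i, dF.mulVec (fun j => z.1 (a, j)) i
      + ∑ b : B₁, dB a b * (P0 b a).mulVec (fun i => z.2 (b, i)) i = 0 := by
    intro a i
    have := congrFun hz1 (a, i)
    simpa [bundleD1] using this
  have hrker : ∀ a, dF.mulVec (r a) = 0 := by
    intro a
    funext i
    have expand : (dF *ᵥ r a) i = (dF *ᵥ fun j => z.1 (a, j)) i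
        + ∑ b : B₁, dB a b * (dF *ᵥ (P1 b a *ᵥ f b)) i := by
      simp only [Matrix.mulVec, dotProduct, hrdef, mul_add, Finset.sum_add_distrib,
        Finset.mul_sum]
      congr 1
      rw [Finset.sum_comm]
      exact Finset.sum_congr rfl fun b _ => Finset.sum_congr rfl fun j _ =>
        Finset.sum_congr rfl fun x _ => by ring
    rw [expand]
    simp only [key]
    simpa using hz1' a i
  set w' : B₁ → F₁ → F := fun b j => S (fun a => r a j) b with hw'def
  have hw'ker : ∀ b, dF.mulVec (w' b) = 0 := by
    intro b
    funext i
    have h1 : (∑ j : F₁, dF i j • (fun a => r a j)) = (0 : B₀ → F) := by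
      funext a
      have := congrFun (hrker a) i
      simpa [Finset.sum_apply, smul_eq_mul, Matrix.mulVec, dotProduct] using this
    have h2 : dF.mulVec (w' b) i = ∑ j : F₁, dF i j * S (fun a => r a j) b := by
      simp [Matrix.mulVec, dotProduct, hw'def]
    rw [h2]
    have h3 : ∀ j : F₁, dF i j * S (fun a => r a j) b = S (dF i j • (fun a => r a j)) b := by
      intro j; rw [LinearMap.map_smul]; rfl
    simp only [h3, ← Finset.sum_apply, ← map_sum, h1, map_zero]
    rfl
  refine ⟨fun p => -(f p.1 p.2) + w' p.1 p.2, ?_⟩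
  have hvec : ∀ b : B₁, (fun j => -(f b j) + w' b j) = -(f b) + w' b := by
    intro b; funext j; rfl
  refine Prod.ext ?_ ?_
  · funext p
    obtain ⟨a, j⟩ := p
    show ∑ b : B₁, dB a b * (P1 b a).mulVec (fun j' => -(f b j') + w' b j') j = z.1 (a, j)
    have hPv : ∀ b : B₁, (P1 b a).mulVec (fun j' => -(f b j') + w' b j')
        = -((P1 b a).mulVec (f b)) + w' b := by
      intro b
      rw [hvec b, Matrix.mulVec_add, Matrix.mulVec_neg, htriv b a (w' b) (hw'ker b)]
    have h4 : ∑ b : B₁, dB a b * w' b j = r a j := by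
      have := congrFun (hSid (fun a => r a j)) a
      simpa [Matrix.mulVecLin_apply, Matrix.mulVec, dotProduct, hw'def] using this
    simp only [hPv, Pi.add_apply, Pi.neg_apply, mul_add, mul_neg, Finset.sum_add_distrib]
    rw [h4]
    simp only [hrdef]
    rw [Finset.sum_neg_distrib]
    ring
  · funext p
    obtain ⟨b, i⟩ := p
    show -(dF.mulVec (fun j => -(f b j) + w' b j) i) = z.2 (b, i)
    rw [hvec b, Matrix.mulVec_add, Matrix.mulVec_neg, hf b, hw'ker b]
    simp
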